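/- Consider the adaptive heavy ball iteration x_{k+1} = x_k - α_k ∇f(x_k) + β_k (x_k - x_{k-1}) with x_{-1} = x_0, α_k = (1 + μ₀)/L for fixed 0 ≤ μ₀ < 1, and β_k chosen by Algorithm AHB (β_k minimizes t ↦ t²‖m_k‖² + 2t γ̃_k - 2α_k t⟨g_k, m_k⟩ over [0, β], where m_k = x_k - x_{k-1}, g_k = ∇f(x_k), and γ̃_k is defined by γ̃_0 = 0, γ̃_k = ‖m_k‖² - α_{k-1}(f(x_{k-1}) - f* + ‖g_{k-1}‖²/(2L)) + β_{k-1} γ̃_{k-1}). Suppose f is convex, continuously differentiable with L-Lipschitz gradient, and has minimum value f*. Then for any minimizer x̂ of f and all k ≥ 0, ‖x_{k+1} - x̂‖² ≤ ‖x_k - x̂‖² - (2(1 - μ₀²)/L)(f(x_k) - f*). -/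

import Mathlib

open scoped RealInnerProductSpace ENNReal
open Set intervalIntegral

section AuxAHB

variable {d : ℕ}
local notation "E" => EuclideanSpace ℝ (Fin d)

lemma ahb_line_hasDerivAt (f : EuclideanSpace ℝ (Fin d) → ℝ) (hf : ContDiff ℝ 1 f)
    (a v : E) (t : ℝ) :
    HasDerivAt (fun s : ℝ => f (a + s • v)) ⟪gradient f (a + t • v), v⟫ t := by
  have hd : DifferentiableAt ℝ f (a + t • v) :=
    (hf.differentiable one_ne_zero).differentiableAt
  have hF : HasFDerivAt f ((InnerProductSpace.toDual ℝ E) (gradient f (a + t • v)))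
      (a + t • v) := hd.hasGradientAt
  have hline : HasDerivAt (fun s : ℝ => a + s • v) v t := by
    simpa using ((hasDerivAt_id t).smul_const v).const_add a
  have h := hF.comp_hasDerivAt t hline
  rw [InnerProductSpace.toDual_apply_apply] at h
  exact h

lemma ahb_convex_grad_ineq (f : EuclideanSpace ℝ (Fin d) → ℝ)
    (hconv : ConvexOn ℝ Set.univ f) (hf : ContDiff ℝ 1 f) (a b : E) :
    f a + ⟪gradient f a, b - a⟫ ≤ f b := by
  set φ : ℝ → ℝ := fun s => f (a + s • (b - a)) with hφ
  have hφconv : ConvexOn ℝ Set.univ φ := by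
    have := hconv.comp_affineMap (AffineMap.lineMap a b : ℝ →ᵃ[ℝ] E)
    have heq : (f ∘ (AffineMap.lineMap a b : ℝ →ᵃ[ℝ] E)) = φ := by
      funext s
      simp [φ, AffineMap.lineMap_apply]
      congr 1
      module
    simpa [heq] using this
  have hD : HasDerivAt φ ⟪gradient f a, b - a⟫ 0 := by
    have := ahb_line_hasDerivAt f hf a (b - a) 0
    simpa using this
  have := hφconv.le_slope_of_hasDerivAt (mem_univ (0:ℝ)) (mem_univ (1:ℝ)) one_pos hD
  have hs : slope φ 0 1 = f b - f a := by
    simp [slope_def_field, φ]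
  rw [hs] at this
  linarith

set_option maxHeartbeats 1000000 in
lemma ahb_descent (f : EuclideanSpace ℝ (Fin d) → ℝ) (hf : ContDiff ℝ 1 f)
    (L : ℝ) (hL : 0 < L)
    (hlip : ∀ x y, ‖gradient f x - gradient f y‖ ≤ L * ‖x - y‖) (a b : E) :
    f b ≤ f a + ⟪gradient f a, b - a⟫ + L / 2 * ‖b - a‖ ^ 2 := by
  set v : E := b - a with hv
  set φ' : ℝ → ℝ := fun t => ⟪gradient f (a + t • v), v⟫ with hφ'
  have hgradcont : Continuous (gradient f) := by
    have : LipschitzWith (Real.toNNReal L) (gradient f) := by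
      apply LipschitzWith.of_dist_le_mul
      intro x y
      rw [dist_eq_norm, dist_eq_norm, Real.coe_toNNReal _ hL.le]
      exact hlip x y
    exact this.continuous
  have hcont : Continuous φ' := by
    apply Continuous.inner
    · exact hgradcont.comp (continuous_const.add (continuous_id.smul continuous_const))
    · exact continuous_const
  have hderiv : ∀ t ∈ uIcc (0:ℝ) 1, HasDerivAt (fun s : ℝ => f (a + s • v)) (φ' t) t :=
    fun t _ => ahb_line_hasDerivAt f hf a v t
  have hint : IntervalIntegrable φ' MeasureTheory.volume 0 1 := hcont.intervalIntegrable 0 1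
  have hFTC : ∫ t in (0:ℝ)..1, φ' t = f (a + (1:ℝ) • v) - f (a + (0:ℝ) • v) :=
    integral_eq_sub_of_hasDerivAt hderiv hint
  have h01 : f b - f a = ∫ t in (0:ℝ)..1, φ' t := by
    rw [hFTC]; simp [hv]
  have hbound : ∀ t ∈ Icc (0:ℝ) 1, φ' t ≤ ⟪gradient f a, v⟫ + L * ‖v‖ ^ 2 * t := by
    intro t ht
    have h1 : φ' t - ⟪gradient f a, v⟫ = ⟪gradient f (a + t • v) - gradient f a, v⟫ := by
      rw [inner_sub_left]
    have h2 : ⟪gradient f (a + t • v) - gradient f a, v⟫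
        ≤ ‖gradient f (a + t • v) - gradient f a‖ * ‖v‖ := real_inner_le_norm _ _
    have h3 : ‖gradient f (a + t • v) - gradient f a‖ ≤ L * (t * ‖v‖) := by
      have := hlip (a + t • v) a
      simpa [norm_smul, abs_of_nonneg ht.1] using this
    nlinarith [norm_nonneg v, mul_nonneg (mul_nonneg hL.le ht.1) (norm_nonneg v)]
  have hmono : ∫ t in (0:ℝ)..1, φ' t
      ≤ ∫ t in (0:ℝ)..1, (⟪gradient f a, v⟫ + L * ‖v‖ ^ 2 * t) := by
    apply integral_mono_on (by norm_num) hint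
    · exact ((continuous_const.add ((continuous_const.mul continuous_id))).intervalIntegrable 0 1)
    · exact hbound
  have hval : ∫ t in (0:ℝ)..1, (⟪gradient f a, v⟫ + L * ‖v‖ ^ 2 * t)
      = ⟪gradient f a, v⟫ + L * ‖v‖ ^ 2 / 2 := by
    rw [integral_add (intervalIntegrable_const) ((intervalIntegrable_id).const_mul _),
      integral_const, integral_const_mul, integral_id]
    simp only [smul_eq_mul]
    ring

  nlinarith [h01, hmono, hval]

end AuxAHB

set_option maxHeartbeats 2000000 in
open Classical in
/-- Key descent estimate for the adaptive heavy ball method (Lemma 4.2 / AHB.lem2):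
for the AHB iteration `x_{k+1} = x_k - α_k ∇f(x_k) + β_k (x_k - x_{k-1})` with
`α_k = (1+μ₀)/L`, `β_k` given by the adaptive formula based on the surrogate `γ̃_k`,
and any minimizer `x̂` (i.e. `f x̂ = f*`),
`‖x_{k+1} - x̂‖² ≤ ‖x_k - x̂‖² - (2(1-μ₀²)/L)(f(x_k) - f*)`. -/
theorem stmt_16
    {d : ℕ} (f : EuclideanSpace ℝ (Fin d) → ℝ)
    (hconv : ConvexOn ℝ Set.univ f) (hf : ContDiff ℝ 1 f)
    (L : ℝ) (hL : 0 < L)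
    (hlip : ∀ x y, ‖gradient f x - gradient f y‖ ≤ L * ‖x - y‖)
    (fstar : ℝ) (hfstar : ∀ y, fstar ≤ f y)
    (μ₀ : ℝ) (hμ₀0 : 0 ≤ μ₀) (hμ₀1 : μ₀ < 1)
    (β : ℝ≥0∞) (hβ : 0 < β)
    (αc : ℝ) (hαc : αc = (1 + μ₀) / L)
    (x g m : ℕ → EuclideanSpace ℝ (Fin d))
    (hg : ∀ k, g k = gradient f (x k))
    (hm0 : m 0 = 0)
    (hm : ∀ k, m (k+1) = x (k+1) - x k)
    (βk : ℕ → ℝ) (γt : ℕ → ℝ)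
    (hβk : ∀ k, βk k = if m k = 0 then 0 else
      (min (ENNReal.ofReal (max 0 ((αc * ⟪g k, m k⟫ - γt k) / ‖m k‖^2))) β).toReal)
    (hγt0 : γt 0 = 0)
    (hγt : ∀ k, γt (k+1)
      = ‖m (k+1)‖^2 - αc * (f (x k) - fstar + ‖g k‖^2 / (2*L)) + βk k * γt k)
    (hx : ∀ k, x (k+1) = x k - αc • g k + βk k • m k) :
    ∀ xh : EuclideanSpace ℝ (Fin d), f xh = fstar → ∀ k,
      ‖x (k+1) - xh‖^2 ≤ ‖x k - xh‖^2 - (2*(1 - μ₀^2)/L) * (f (x k) - fstar) := by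
  intro xh hxh
  have hαpos : 0 < αc := by
    rw [hαc]; positivity
  -- gradient vanishes at the minimizer
  have hgz : gradient f xh = 0 := by
    have hloc : IsLocalMin f xh :=
      Filter.Eventually.of_forall (fun y => by rw [hxh]; exact hfstar y)
    have h0 : fderiv ℝ f xh = 0 := hloc.fderiv_eq_zero
    show (InnerProductSpace.toDual ℝ (EuclideanSpace ℝ (Fin d))).symm (fderiv ℝ f xh) = 0
    rw [h0]; simp
  -- smul norm squared helper
  have hsm : ∀ (c : ℝ) (v : EuclideanSpace ℝ (Fin d)), ‖c • v‖^2 = c^2 * ‖v‖^2 := by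
    intro c v
    rw [norm_smul, mul_pow, Real.norm_eq_abs, sq_abs]
  -- (b) : ‖∇f z‖² / (2L) ≤ f z - fstar
  have hbnd : ∀ z : EuclideanSpace ℝ (Fin d), ‖gradient f z‖^2 / (2*L) ≤ f z - fstar := by
    intro z
    set gz := gradient f z with hgzdef
    have h := ahb_descent f hf L hL hlip z (z - L⁻¹ • gz)
    have h1 : (z - L⁻¹ • gz) - z = -(L⁻¹ • gz) := by abel
    rw [h1] at h
    have h2 : ⟪gz, -(L⁻¹ • gz)⟫ = -(L⁻¹ * ‖gz‖^2) := by
      rw [inner_neg_right, real_inner_smul_right, real_inner_self_eq_norm_sq]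
    have h3 : ‖-(L⁻¹ • gz)‖^2 = L⁻¹^2 * ‖gz‖^2 := by
      rw [norm_neg, hsm]
    rw [h2, h3] at h
    have h4 := hfstar (z - L⁻¹ • gz)
    have h5 : L/2 * (L⁻¹^2 * ‖gz‖^2) = ‖gz‖^2/(2*L) := by
      field_simp
    have h6 : L⁻¹ * ‖gz‖^2 = ‖gz‖^2/L := by field_simp
    rw [h5, h6] at h
    have h7 : ‖gz‖^2/L - ‖gz‖^2/(2*L) = ‖gz‖^2/(2*L) := by
      field_simp; ring
    linarith
  -- (a) : cocoercivity at the minimizer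
  have hco : ∀ z : EuclideanSpace ℝ (Fin d),
      f z - fstar + ‖gradient f z‖^2 / (2*L) ≤ ⟪gradient f z, z - xh⟫ := by
    intro z
    set gz := gradient f z with hgzdef
    set w : EuclideanSpace ℝ (Fin d) := xh + L⁻¹ • gz with hw
    have h1 := ahb_convex_grad_ineq f hconv hf z w
    have h2 := ahb_descent f hf L hL hlip xh w
    have h3 : w - xh = L⁻¹ • gz := by rw [hw]; abel
    rw [h3, hgz] at h2
    have h4 : ⟪(0 : EuclideanSpace ℝ (Fin d)), L⁻¹ • gz⟫ = 0 := inner_zero_left _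
    rw [h4, hsm] at h2
    have h5 : w - z = (xh - z) + L⁻¹ • gz := by rw [hw]; abel
    have h6 : ⟪gz, w - z⟫ = ⟪gz, xh - z⟫ + L⁻¹ * ‖gz‖^2 := by
      rw [h5, inner_add_right, real_inner_smul_right, real_inner_self_eq_norm_sq]
    rw [h6] at h1
    have h7 : ⟪gz, z - xh⟫ = -⟪gz, xh - z⟫ := by
      rw [show z - xh = -(xh - z) by abel, inner_neg_right]
    have h8 : L/2 * (L⁻¹^2 * ‖gz‖^2) = ‖gz‖^2/(2*L) := by field_simp
    have h9 : L⁻¹ * ‖gz‖^2 = ‖gz‖^2/L := by field_simp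
    rw [h8] at h2
    rw [h9] at h1
    have h10 : ‖gz‖^2/L - ‖gz‖^2/(2*L) = ‖gz‖^2/(2*L) := by field_simp; ring
    rw [h7]
    rw [hxh] at h2
    linarith
  -- β_k nonneg
  have hβnn : ∀ k, 0 ≤ βk k := by
    intro k
    rw [hβk k]
    split
    · exact le_refl 0
    · exact ENNReal.toReal_nonneg
  -- quadratic value nonpositive
  have hquad : ∀ k, βk k^2 * ‖m k‖^2 + 2*(βk k)*(γt k) - 2*αc*(βk k)*⟪g k, m k⟫ ≤ 0 := by
    intro k
    by_cases hz : m k = 0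
    · rw [hβk k, if_pos hz]; norm_num
    · have hb := hβk k
      rw [if_neg hz] at hb
      set c := αc * ⟪g k, m k⟫ - γt k with hc
      set M := ‖m k‖^2 with hM
      have hMpos : 0 < M := by
        rw [hM]
        have := norm_pos_iff.mpr hz
        positivity
      have hb0 : 0 ≤ βk k := hβnn k
      have hble : βk k ≤ max 0 (c / M) := by
        rw [hb]
        have h1 : min (ENNReal.ofReal (max 0 (c/M))) β ≤ ENNReal.ofReal (max 0 (c/M)) :=
          min_le_left _ _
        have h2 := ENNReal.toReal_mono ENNReal.ofReal_ne_top h1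
        rwa [ENNReal.toReal_ofReal (le_max_left 0 _)] at h2
      rcases le_or_gt c 0 with hcle | hcpos
      · have hmax : max 0 (c/M) = 0 :=
          max_eq_left (div_nonpos_of_nonpos_of_nonneg hcle hMpos.le)
        have hb00 : βk k = 0 := le_antisymm (by rw [hmax] at hble; exact hble) hb0
        rw [hb00]; norm_num
      · have hmax : max 0 (c/M) = c/M := max_eq_right (le_of_lt (div_pos hcpos hMpos))
        rw [hmax] at hble
        have hble' : βk k * M ≤ c := (le_div_iff₀ hMpos).mp hble
        nlinarith [mul_le_mul_of_nonneg_left hble' hb0, mul_nonneg hb0 hcpos.le]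
  -- recursion for m
  have hmrec : ∀ k, m (k+1) = βk k • m k - αc • g k := by
    intro k
    rw [hm k, hx k]
    abel
  -- the γ bound, by induction
  have hγle : ∀ k, ⟪m k, x k - xh⟫ ≤ γt k := by
    intro k
    induction k with
    | zero => rw [hm0, hγt0, inner_zero_left]
    | succ k ih =>
      have hx1 : x (k+1) - xh = (x k - xh) + m (k+1) := by rw [hm k]; abel
      have e1 : ⟪m (k+1), x (k+1) - xh⟫ = ⟪m (k+1), x k - xh⟫ + ‖m (k+1)‖^2 := by
        rw [hx1, inner_add_right, real_inner_self_eq_norm_sq]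
      have e2 : ⟪m (k+1), x k - xh⟫
          = βk k * ⟪m k, x k - xh⟫ - αc * ⟪g k, x k - xh⟫ := by
        rw [hmrec k, inner_sub_left, real_inner_smul_left, real_inner_smul_left]
      have p1 : βk k * ⟪m k, x k - xh⟫ ≤ βk k * γt k :=
        mul_le_mul_of_nonneg_left ih (hβnn k)
      have p2 : αc * (f (x k) - fstar + ‖g k‖^2/(2*L)) ≤ αc * ⟪g k, x k - xh⟫ := by
        apply mul_le_mul_of_nonneg_left _ hαpos.le
        rw [hg k]
        exact hco (x k)
      rw [e1, e2, hγt k]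
      linarith
  -- main estimate
  intro k
  set A := ‖x k - xh‖^2 with hA
  set F := f (x k) - fstar with hF
  set G := ‖g k‖^2 with hG
  have hx1 : x (k+1) - xh = (x k - xh) + m (k+1) := by rw [hm k]; abel
  have hnorm : ‖x (k+1) - xh‖^2
      = A + 2*⟪x k - xh, m (k+1)⟫ + ‖m (k+1)‖^2 := by
    rw [hx1, norm_add_sq_real]
  have e2 : ⟪x k - xh, m (k+1)⟫
      = βk k * ⟪m k, x k - xh⟫ - αc * ⟪g k, x k - xh⟫ := by
    rw [real_inner_comm, hmrec k, inner_sub_left, real_inner_smul_left, real_inner_smul_left]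
  have e3 : ‖m (k+1)‖^2
      = βk k^2 * ‖m k‖^2 - 2*αc*(βk k)*⟪g k, m k⟫ + αc^2*G := by
    rw [hmrec k, norm_sub_sq_real, hsm, hsm, real_inner_smul_left, real_inner_smul_right,
      real_inner_comm (m k) (g k)]
    ring
  have p1 : βk k * ⟪m k, x k - xh⟫ ≤ βk k * γt k :=
    mul_le_mul_of_nonneg_left (hγle k) (hβnn k)
  have p2 : αc * (F + G/(2*L)) ≤ αc * ⟪g k, x k - xh⟫ := by
    apply mul_le_mul_of_nonneg_left _ hαpos.le
    rw [hF, hG, hg k]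
    exact hco (x k)
  have hG2 : G ≤ 2*L*F := by
    have := hbnd (x k)
    rw [← hg k] at this
    rw [hG, hF]
    rw [div_le_iff₀ (by positivity)] at this
    linarith
  have s2 : ‖x (k+1) - xh‖^2 ≤ A - 2*αc*F - αc*G/L + αc^2*G := by
    have hq := hquad k
    rw [hnorm, e2, e3]
    have hd : αc * (F + G/(2*L)) = αc*F + αc*G/(2*L) := by ring
    rw [hd] at p2
    have hdd : αc*G/(2*L) * 2 = αc*G/L := by ring
    nlinarith [p1, p2, hq]
  have hc0 : 0 ≤ αc*μ₀/L := div_nonneg (mul_nonneg hαpos.le hμ₀0) hL.le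
  have s3 : -(αc*G/L) + αc^2*G ≤ 2*μ₀*αc*F := by
    have hmul := mul_le_mul_of_nonneg_left hG2 hc0
    have he1 : -(αc*G/L) + αc^2*G = (αc*μ₀/L)*G := by
      rw [hαc]; field_simp; ring
    have he2 : (αc*μ₀/L)*(2*L*F) = 2*μ₀*αc*F := by
      field_simp
    rw [he1]
    rw [he2] at hmul
    exact hmul
  have s4 : -(2*αc*F) + 2*μ₀*αc*F = -((2*(1 - μ₀^2)/L)*F) := by
    rw [hαc]; field_simp; ring
  linarith [s2, s3, s4]
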